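/- Let f = ((k_D, k_S, k_L, k_U), n_min, n_max) be a password policy with k_all := n_min − (k_D + k_S + k_L + k_U) ≥ 0 and n_min ≤ n_max. Suppose x'₁,…,x'_{n_max} ∈ {0,1}^8 are length-8 blocks, and suppose there are pairwise-distinct indices δ_{α,i} ∈ [n_max] for α ∈ {D, S, L, U, all} and i ∈ [k_α], such that x'_{δ_{α,i}} ∈ Enc_α for every α and i. Then the string pw' over Σ_all obtained by taking, in order of increasing index j ∈ [n_max], the characters c with encode(c) = x'_j for those j with x'_j ∈ Enc_all, has length t' with n_min ≤ t' ≤ n_max, contains at least k_D digits, at least k_S symbols, at least k_L lower-case letters and at least k_U upper-case letters; i.e., f(pw') = true. -/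

import Mathlib

open scoped Classical

/-- Characters are identified with their ASCII codes in `[0,255]` (distinct characters have
distinct ASCII codes). `encode(c) ∈ {0,1}^8` is the 8-bit binary representation of the
ASCII code of `c`, as a vector over `ℤ`. -/
def encodeChar (c : Fin 256) : Fin 8 → ℤ :=
  fun i => (((c : ℕ) / 2 ^ (i : ℕ)) % 2 : ℕ)

lemma enc_inj : Function.Injective encodeChar := by
  intro a b h
  have h' : ∀ i : ℕ, i < 8 → (a:ℕ)/2^i % 2 = (b:ℕ)/2^i % 2 := by
    intro i hi
    have := congrFun h ⟨i, hi⟩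
    simp only [encodeChar] at this
    exact_mod_cast this
  have hab : (a:ℕ) = b := by
    apply Nat.eq_of_testBit_eq
    intro i
    rcases lt_or_ge i 8 with hi | hi
    · simp [Nat.testBit_eq_decide_div_mod_eq, h' i hi]
    · have ha : (a:ℕ) < 2^i := lt_of_lt_of_le a.isLt (by calc (256:ℕ) = 2^8 := by norm_num
        _ ≤ 2^i := Nat.pow_le_pow_right two_pos hi)
      have hb : (b:ℕ) < 2^i := lt_of_lt_of_le b.isLt (by calc (256:ℕ) = 2^8 := by norm_num
        _ ≤ 2^i := Nat.pow_le_pow_right two_pos hi)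
      simp [Nat.testBit_lt_two_pow ha, Nat.testBit_lt_two_pow hb]
  exact Fin.ext hab

lemma list_card {n : ℕ} (p : Fin n → Bool) :
    ((List.finRange n).filter p).length = (Finset.univ.filter (fun j => p j = true)).card := by
  rw [Fin.univ_def]
  simp [Finset.filter, Finset.card]

lemma count_ge {n : ℕ} {ι : Type} [Fintype ι] (x' : Fin n → Fin 8 → ℤ)
    (q : (Fin 8 → ℤ) → Bool) (g : ι → Fin n) (hg : Function.Injective g)
    (hq : ∀ i, q (x' (g i)) = true) :
    Fintype.card ι ≤ (((List.finRange n).map x').filter q).length := by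
  rw [List.filter_map, List.length_map, list_card]
  calc Fintype.card ι = (Finset.univ.image g).card :=
        (Finset.card_image_of_injective _ hg).symm
    _ ≤ _ := by
        apply Finset.card_le_card
        intro j hj
        simp only [Finset.mem_image] at hj
        obtain ⟨i, _, rfl⟩ := hj
        simp [hq i]

theorem stmt14 (kD kS kL kU kA nmin nmax : ℕ)
    (hsum : kD + kS + kL + kU + kA = nmin) (hmn : nmin ≤ nmax)
    (SD SS SL SU : Set (Fin 256))
    (hDS : Disjoint SD SS) (hDL : Disjoint SD SL) (hDU : Disjoint SD SU)
    (hSL : Disjoint SS SL) (hSU : Disjoint SS SU) (hLU : Disjoint SL SU)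
    (x' : Fin nmax → Fin 8 → ℤ)
    (δD : Fin kD → Fin nmax) (δS : Fin kS → Fin nmax) (δL : Fin kL → Fin nmax)
    (δU : Fin kU → Fin nmax) (δA : Fin kA → Fin nmax)
    (hinj : Function.Injective
      (Sum.elim (Sum.elim δD δS) (Sum.elim (Sum.elim δL δU) δA)))
    (hD : ∀ i, x' (δD i) ∈ encodeChar '' SD)
    (hS : ∀ i, x' (δS i) ∈ encodeChar '' SS)
    (hL : ∀ i, x' (δL i) ∈ encodeChar '' SL)
    (hU : ∀ i, x' (δU i) ∈ encodeChar '' SU)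
    (hA : ∀ i, x' (δA i) ∈ encodeChar '' (SD ∪ SS ∪ SL ∪ SU)) :
    ∀ pw' : List (Fin 256),
      pw'.map encodeChar
        = ((List.finRange nmax).map x').filter
            (fun b => decide (b ∈ encodeChar '' (SD ∪ SS ∪ SL ∪ SU))) →
      nmin ≤ pw'.length ∧ pw'.length ≤ nmax
        ∧ kD ≤ (pw'.filter fun c => decide (c ∈ SD)).length
        ∧ kS ≤ (pw'.filter fun c => decide (c ∈ SS)).length
        ∧ kL ≤ (pw'.filter fun c => decide (c ∈ SL)).length
        ∧ kU ≤ (pw'.filter fun c => decide (c ∈ SU)).length := by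
  intro pw' hpw
  have hsubD : SD ⊆ SD ∪ SS ∪ SL ∪ SU := by intro a ha; simp [Set.mem_union, ha]
  have hsubS : SS ⊆ SD ∪ SS ∪ SL ∪ SU := by intro a ha; simp [Set.mem_union, ha]
  have hsubL : SL ⊆ SD ∪ SS ∪ SL ∪ SU := by intro a ha; simp [Set.mem_union, ha]
  have hsubU : SU ⊆ SD ∪ SS ∪ SL ∪ SU := by intro a ha; simp [Set.mem_union, ha]
  have hlen : pw'.length
      = (((List.finRange nmax).map x').filter
          (fun b => decide (b ∈ encodeChar '' (SD ∪ SS ∪ SL ∪ SU)))).length := by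
    have := congrArg List.length hpw
    rwa [List.length_map] at this
  have main : ∀ (S : Set (Fin 256)), S ⊆ SD ∪ SS ∪ SL ∪ SU →
      ∀ {k : ℕ} (g : Fin k → Fin nmax), Function.Injective g →
      (∀ i, x' (g i) ∈ encodeChar '' S) →
      k ≤ (pw'.filter fun c => decide (c ∈ S)).length := by
    intro S hSsub k g hg hgv
    have h2 := congrArg (List.filter (fun b => decide (b ∈ encodeChar '' S))) hpw
    rw [List.filter_map] at h2
    have h3 : ((fun b => decide (b ∈ encodeChar '' S)) ∘ encodeChar)
        = fun c => decide (c ∈ S) := by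
      funext c
      simp [Function.comp, enc_inj.mem_set_image]
    rw [h3] at h2
    have h4 : (((List.finRange nmax).map x').filter
        (fun b => decide (b ∈ encodeChar '' (SD ∪ SS ∪ SL ∪ SU)))).filter
        (fun b => decide (b ∈ encodeChar '' S))
        = ((List.finRange nmax).map x').filter (fun b => decide (b ∈ encodeChar '' S)) := by
      rw [List.filter_filter]
      apply List.filter_congr
      intro b _
      by_cases hb : b ∈ encodeChar '' S
      · simp [hb, Set.image_mono (f := encodeChar) hSsub hb]
      · simp [hb]
    have h5 : (pw'.filter fun c => decide (c ∈ S)).length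
        = (((List.finRange nmax).map x').filter
            (fun b => decide (b ∈ encodeChar '' S))).length := by
      calc (pw'.filter fun c => decide (c ∈ S)).length
          = ((pw'.filter fun c => decide (c ∈ S)).map encodeChar).length :=
            (List.length_map _).symm
        _ = _ := by rw [h2, h4]
    rw [h5]
    have := count_ge x' (fun b => decide (b ∈ encodeChar '' S)) g hg
      (fun i => by simp [hgv i])
    simpa using this
  refine ⟨?_, ?_, ?_, ?_, ?_, ?_⟩
  · -- nmin ≤ length
    rw [hlen]
    have := count_ge x' (fun b => decide (b ∈ encodeChar '' (SD ∪ SS ∪ SL ∪ SU)))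
      (Sum.elim (Sum.elim δD δS) (Sum.elim (Sum.elim δL δU) δA)) hinj
      (fun i => by
        rcases i with ((i|i)|((i|i)|i)) <;> simp only [Sum.elim_inl, Sum.elim_inr]
        · exact decide_eq_true (Set.image_mono hsubD (hD i))
        · exact decide_eq_true (Set.image_mono hsubS (hS i))
        · exact decide_eq_true (Set.image_mono hsubL (hL i))
        · exact decide_eq_true (Set.image_mono hsubU (hU i))
        · exact decide_eq_true (hA i))
    simp only [Fintype.card_sum, Fintype.card_fin] at this
    omega
  · rw [hlen]
    exact le_trans (List.length_filter_le _ _) (by simp)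
  · exact main SD hsubD δD (fun a b hab => by
      have : (Sum.inl (Sum.inl a) : (Fin kD ⊕ Fin kS) ⊕ (Fin kL ⊕ Fin kU) ⊕ Fin kA)
          = Sum.inl (Sum.inl b) := hinj hab
      simpa using this) hD
  · exact main SS hsubS δS (fun a b hab => by
      have : (Sum.inl (Sum.inr a) : (Fin kD ⊕ Fin kS) ⊕ (Fin kL ⊕ Fin kU) ⊕ Fin kA)
          = Sum.inl (Sum.inr b) := hinj hab
      simpa using this) hS
  · exact main SL hsubL δL (fun a b hab => by
      have : (Sum.inr (Sum.inl (Sum.inl a)) : (Fin kD ⊕ Fin kS) ⊕ (Fin kL ⊕ Fin kU) ⊕ Fin kA)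
          = Sum.inr (Sum.inl (Sum.inl b)) := hinj hab
      simpa using this) hL
  · exact main SU hsubU δU (fun a b hab => by
      have : (Sum.inr (Sum.inl (Sum.inr a)) : (Fin kD ⊕ Fin kS) ⊕ (Fin kL ⊕ Fin kU) ⊕ Fin kA)
          = Sum.inr (Sum.inl (Sum.inr b)) := hinj hab
      simpa using this) hU
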